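/- A map ε : X×X∖Δ → P(M) is a k-restricted Fitch map if and only if ε satisfies the hierarchy-like condition (HLC), the inequality condition (IC), and the k-edge-label condition (k-ELC). -/

import Mathlib

/-- A finite rooted phylogenetic tree on leaf set `X`, with vertex type `V`.
Vertices are encoded via a parent function; `par root = root`. -/
structure PhyloTree (V X : Type) : Type where
  fin : Finite V
  root : V
  par : V → V
  par_root : par root = root
  reach : ∀ v : V, ∃ n : ℕ, par^[n] v = root
  leaf : X → V
  leaf_inj : Function.Injective leaf
  leaf_isLeaf : ∀ (x : X) (u : V), par u = leaf x → u = leaf x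
  leaf_only : ∀ v : V, (∀ u : V, par u = v → u = v) → ∃ x : X, leaf x = v
  root_deg : (∃ x : X, leaf x = root) ∨ 2 ≤ {u : V | par u = root ∧ u ≠ root}.ncard
  inner_deg : ∀ v : V, v ≠ root → (¬ ∃ x : X, leaf x = v) →
      2 ≤ {u : V | par u = v ∧ u ≠ v}.ncard

namespace PhyloTree

variable {V X : Type}

/-- `T.anc u v` : `u` is an ancestor of `v`, i.e. `u ⪯_T v`. -/
def anc (T : PhyloTree V X) (u v : V) : Prop := ∃ n : ℕ, T.par^[n] v = u

/-- `l` is the last common ancestor of `a` and `b`. -/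
def IsLca (T : PhyloTree V X) (l a b : V) : Prop :=
  T.anc l a ∧ T.anc l b ∧ ∀ u : V, T.anc u a → T.anc u b → T.anc u l

/-- The cluster of `v`: the set of leaves below `v`. -/
def cluster (T : PhyloTree V X) (v : V) : Set X := {x : X | T.anc v (T.leaf x)}

/-- The cluster set `C(T)`. -/
def clusterSet (T : PhyloTree V X) : Set (Set X) := {S : Set X | ∃ v : V, S = T.cluster v}

/-- The edge `(par u, u)` lies on the descending path from `a` down to `b`. -/
def edgeOnDown (T : PhyloTree V X) (a b u : V) : Prop :=
  T.anc a u ∧ u ≠ a ∧ T.anc u b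

/-- The edge `(par u, u)` lies on the unique path between `v` and `w`. -/
def edgeOnPath (T : PhyloTree V X) (v w u : V) : Prop :=
  ∃ l : V, T.IsLca l v w ∧ (T.edgeOnDown l v u ∨ T.edgeOnDown l w u)

/-- `T` displays the rooted triple `ab|c`. -/
def Displays (T : PhyloTree V X) (a b c : X) : Prop :=
  ∃ l3 l2 : V, T.IsLca l2 (T.leaf a) (T.leaf b) ∧
    T.IsLca l3 l2 (T.leaf c) ∧ l3 ≠ l2

end PhyloTree

/-- `(T, lab)` explains `ε` : for distinct leaves `x,y`, `m ∈ ε x y` iff there is an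
`m`-edge on the path from `lca(x,y)` down to `y`. -/
def Explains {V X M : Type} (T : PhyloTree V X) (lab : V → Set M)
    (ε : X → X → Set M) : Prop :=
  ∀ x y : X, x ≠ y → ∀ m : M,
    (m ∈ ε x y ↔ ∃ l : V, T.IsLca l (T.leaf x) (T.leaf y) ∧
      ∃ u : V, T.edgeOnDown l (T.leaf y) u ∧ m ∈ lab u)

/-- `ε` is a Fitch map: it is explained by some edge-labeled phylogenetic tree. -/
def IsFitchMap {X M : Type} (ε : X → X → Set M) : Prop :=
  ∃ (V : Type) (T : PhyloTree V X) (lab : V → Set M), Explains T lab ε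

/-- The complementary neighborhood `N_{¬m}[y]`. -/
def Nbr {X M : Type} (ε : X → X → Set M) (m : M) (y : X) : Set X :=
  {x : X | x ≠ y ∧ m ∉ ε x y} ∪ {y}

/-- The collection `N[ε]` of all complementary neighborhoods. -/
def NbrSet {X M : Type} (ε : X → X → Set M) : Set (Set X) :=
  {N : Set X | ∃ (m : M) (y : X), N = Nbr ε m y}

/-- A set system is hierarchy-like if any two members intersect in `∅` or one of them. -/
def HLike {X : Type} (H : Set (Set X)) : Prop :=
  ∀ P ∈ H, ∀ Q ∈ H, P ∩ Q = P ∨ P ∩ Q = Q ∨ P ∩ Q = ∅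

/-- The inequality condition (IC). -/
def IneqCond {X M : Type} (ε : X → X → Set M) : Prop :=
  ∀ (m : M) (y y' : X), y' ∈ Nbr ε m y → (Nbr ε m y').ncard ≤ (Nbr ε m y).ncard


/-- `ε` is a `k`-restricted Fitch map. -/
def KRestricted {X M : Type} (ε : X → X → Set M) (k : ℕ) : Prop :=
  ∃ (V : Type) (T : PhyloTree V X) (lab : V → Set M),
    Explains T lab ε ∧ ∀ v : V, v ≠ T.root → (lab v).ncard ≤ k

/-- The `k`-edge-label condition (`k`-ELC). -/
def KELC {X M : Type} (ε : X → X → Set M) (k : ℕ) : Prop :=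
  ∀ N ∈ NbrSet ε, N ≠ (Set.univ : Set X) →
    {m : M | ∃ y : X, N = Nbr ε m y}.ncard ≤ k

namespace Fitch15

variable {V X M : Type}

section TreeLemmas

variable (T : PhyloTree V X)

theorem anc_refl (v : V) : T.anc v v := ⟨0, rfl⟩

theorem anc_trans {u v w : V} (h1 : T.anc u v) (h2 : T.anc w u) : T.anc w v := by
  obtain ⟨n, hn⟩ := h1; obtain ⟨m, hm⟩ := h2
  exact ⟨m + n, by rw [Function.iterate_add_apply, hn, hm]⟩

theorem iterate_root (n : ℕ) : T.par^[n] T.root = T.root := by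
  induction n with
  | zero => rfl
  | succ k ih => rw [Function.iterate_succ_apply', ih, T.par_root]

theorem iterate_ge {v : V} {d : ℕ} (hd : T.par^[d] v = T.root) {j : ℕ} (hj : d ≤ j) :
    T.par^[j] v = T.root := by
  obtain ⟨c, rfl⟩ := Nat.exists_eq_add_of_le hj
  rw [Nat.add_comm, Function.iterate_add_apply, hd, iterate_root]

theorem root_anc (v : V) : T.anc T.root v := T.reach v

theorem anc_antisymm {u v : V} (h1 : T.anc u v) (h2 : T.anc v u) : u = v := by
  obtain ⟨n, hn⟩ := h1; obtain ⟨m, hm⟩ := h2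
  rcases Nat.eq_zero_or_pos (m + n) with h | h
  · have hn0 : n = 0 := by omega
    subst hn0; simpa using hn.symm
  · have hcyc : T.par^[m + n] v = v := by rw [Function.iterate_add_apply, hn, hm]
    have hiter : ∀ t : ℕ, T.par^[t * (m + n)] v = v := by
      intro t
      induction t with
      | zero => simp
      | succ s ih => rw [Nat.succ_mul, Function.iterate_add_apply, hcyc, ih]
    obtain ⟨d, hd⟩ := T.reach v
    have hv : v = T.root := by
      have := hiter d
      rw [iterate_ge T hd (Nat.le_mul_of_pos_right d h)] at this
      exact this.symm
    subst hv
    have hu : u = T.root := by rw [← hn, iterate_root]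
    rw [hu]

/-- Two ancestors of a common vertex are comparable. -/
theorem anc_total {u v w : V} (h1 : T.anc u w) (h2 : T.anc v w) :
    T.anc u v ∨ T.anc v u := by
  obtain ⟨n, hn⟩ := h1; obtain ⟨m, hm⟩ := h2
  rcases Nat.le_total n m with h | h
  · right
    obtain ⟨c, rfl⟩ := Nat.exists_eq_add_of_le h
    exact ⟨c, by rw [← hn, ← Function.iterate_add_apply, Nat.add_comm, hm]⟩
  · left
    obtain ⟨c, rfl⟩ := Nat.exists_eq_add_of_le h
    exact ⟨c, by rw [← hm, ← Function.iterate_add_apply, Nat.add_comm, hn]⟩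

theorem lca_exists (a b : V) : ∃ l : V, T.IsLca l a b := by
  have hS : ∃ n : ℕ, T.anc (T.par^[n] a) b := by
    obtain ⟨d, hd⟩ := T.reach a
    exact ⟨d, by rw [hd]; exact root_anc T b⟩
  classical
  set n0 := Nat.find hS with hn0
  refine ⟨T.par^[n0] a, ⟨n0, rfl⟩, Nat.find_spec hS, ?_⟩
  rintro u ⟨j, hj⟩ hub
  have hjn : n0 ≤ j := by
    by_contra hlt
    exact Nat.find_min hS (not_le.mp hlt) (by rw [hj]; exact hub)
  obtain ⟨c, rfl⟩ := Nat.exists_eq_add_of_le hjn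
  exact ⟨c, by rw [← Function.iterate_add_apply, Nat.add_comm, hj]⟩

theorem lca_unique {l l' a b : V} (h : T.IsLca l a b) (h' : T.IsLca l' a b) : l = l' :=
  anc_antisymm T (h'.2.2 l h.1 h.2.1) (h.2.2 l' h'.1 h'.2.1)

theorem cluster_mono {u v : V} (h : T.anc u v) : T.cluster v ⊆ T.cluster u :=
  fun _ hx => anc_trans T hx h

theorem cluster_root : T.cluster T.root = Set.univ :=
  Set.eq_univ_of_forall fun x => root_anc T (T.leaf x)

theorem cluster_nonempty (v : V) : (T.cluster v).Nonempty := by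
  haveI := T.fin
  suffices h : ∀ (n : ℕ) (v : V), ({w : V | T.anc v w}).ncard ≤ n → (T.cluster v).Nonempty by
    exact h ({w : V | T.anc v w}).ncard v le_rfl
  intro n
  induction n with
  | zero =>
    intro v hv
    exfalso
    have : v ∈ {w : V | T.anc v w} := anc_refl T v
    have hpos : 0 < ({w : V | T.anc v w}).ncard :=
      Set.ncard_pos (Set.toFinite _) |>.mpr ⟨v, this⟩
    omega
  | succ k ih =>
    intro v hv
    by_cases hl : ∃ x : X, T.leaf x = v
    · obtain ⟨x, rfl⟩ := hl
      exact ⟨x, anc_refl T _⟩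
    · have : ¬ ∀ u : V, T.par u = v → u = v := fun h => hl (T.leaf_only v h)
      push_neg at this
      obtain ⟨u, hu, hne⟩ := this
      have hanc : T.anc v u := ⟨1, hu⟩
      have hsub : {w : V | T.anc u w} ⊂ {w : V | T.anc v w} := by
        constructor
        · intro w hw; exact anc_trans T hw hanc
        · intro hcon
          have : T.anc u v := hcon (anc_refl T v)
          exact hne (anc_antisymm T this hanc)
      have hlt : ({w : V | T.anc u w}).ncard < ({w : V | T.anc v w}).ncard :=
        Set.ncard_lt_ncard hsub (Set.toFinite _)
      have := ih u (by omega)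
      obtain ⟨x, hx⟩ := this
      exact ⟨x, anc_trans T hx hanc⟩

/-- Distinct children of a vertex are incomparable. -/
theorem children_incomp {v c c' : V} (hc : T.par c = v) (hc' : T.par c' = v)
    (hcv : c ≠ v) (h : T.anc c c') : c = c' := by
  obtain ⟨i, hi⟩ := h
  match i, hi with
  | 0, hi => exact hi.symm
  | (j+1), hi =>
    exfalso
    rw [Function.iterate_succ_apply, hc'] at hi
    have h1 : T.anc c v := ⟨j, hi⟩
    have h2 : T.anc v c := ⟨1, hc⟩
    exact hcv (anc_antisymm T h1 h2)

theorem cluster_ne_of_child {v c : V} (hc : T.par c = v) (hcv : c ≠ v) (hvr : v ≠ T.root) :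
    T.cluster c ≠ T.cluster v := by
  haveI := T.fin
  intro heq
  have hnl : ¬ ∃ x : X, T.leaf x = v := by
    rintro ⟨x, rfl⟩
    exact hcv (T.leaf_isLeaf x c hc)
  have hdeg := T.inner_deg v hvr hnl
  have hcm : c ∈ {u : V | T.par u = v ∧ u ≠ v} := ⟨hc, hcv⟩
  have h1lt : 1 < ({u : V | T.par u = v ∧ u ≠ v}).ncard := by omega
  obtain ⟨c', hc'm, hcc'⟩ := Set.exists_ne_of_one_lt_ncard h1lt c
  obtain ⟨x, hx⟩ := cluster_nonempty T c'
  have hx2 : x ∈ T.cluster c := by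
    rw [heq]
    exact cluster_mono T ⟨1, hc'm.1⟩ hx
  rcases anc_total T hx2 hx with h | h
  · exact hcc' (children_incomp T hc hc'm.1 hcv h).symm
  · exact hcc' ((children_incomp T hc'm.1 hc hc'm.2 h))

theorem cluster_inj_aux {u v : V} (hvu : T.anc v u) (hne : u ≠ v)
    (heq : T.cluster u = T.cluster v) (hnu : T.cluster v ≠ Set.univ) : False := by
  classical
  have hS : ∃ n : ℕ, T.par^[n] u = v := hvu
  set n0 := Nat.find hS with hn0def
  have hspec : T.par^[n0] u = v := Nat.find_spec hS
  have hn0pos : n0 ≠ 0 := by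
    intro h0
    rw [h0] at hspec
    exact hne (by simpa using hspec)
  have hn0eq : n0 = (n0 - 1) + 1 := by omega
  set c := T.par^[n0 - 1] u with hcdef
  have hpc : T.par c = v := by
    have : T.par^[(n0 - 1) + 1] u = v := by rw [← hn0eq]; exact hspec
    rw [Function.iterate_succ_apply'] at this
    exact this
  have hcv : c ≠ v := by
    intro h
    exact Nat.find_min hS (show n0 - 1 < n0 by omega) h
  have hvr : v ≠ T.root := by
    intro h
    rw [h] at hnu
    exact hnu (cluster_root T)
  have hcu : T.anc c u := ⟨n0 - 1, rfl⟩
  have hvc : T.anc v c := ⟨1, hpc⟩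
  have hcc : T.cluster c = T.cluster v := by
    apply Set.Subset.antisymm (cluster_mono T hvc)
    rw [← heq]
    exact cluster_mono T hcu
  exact cluster_ne_of_child T hpc hcv hvr hcc

theorem cluster_inj {u v : V} (h : T.cluster u = T.cluster v)
    (hne : T.cluster u ≠ Set.univ) : u = v := by
  obtain ⟨x, hx⟩ := cluster_nonempty T u
  have hx' : x ∈ T.cluster v := h ▸ hx
  by_contra hneq
  rcases anc_total T hx hx' with hc | hc
  · exact cluster_inj_aux T hc (Ne.symm hneq) h.symm (h ▸ hne)
  · exact cluster_inj_aux T hc hneq h (h ▸ hne)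

end TreeLemmas

end Fitch15
namespace Fitch15

section Forward

variable {V X M : Type} (T : PhyloTree V X) (lab : V → Set M) (ε : X → X → Set M)

theorem nbr_cases (hex : Explains T lab ε) (m : M) (y : X) :
    ((∀ u : V, T.anc u (T.leaf y) → m ∉ lab u) ∧ Nbr ε m y = Set.univ) ∨
    ∃ u0 : V, m ∈ lab u0 ∧ T.anc u0 (T.leaf y) ∧ Nbr ε m y = T.cluster u0 ∧
      ∀ u' : V, m ∈ lab u' → T.anc u' (T.leaf y) → T.anc u' u0 := by
  classical
  by_cases hE : ∃ n : ℕ, m ∈ lab (T.par^[n] (T.leaf y))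
  · right
    set n0 := Nat.find hE with hn0
    set u0 := T.par^[n0] (T.leaf y) with hu0
    have hm0 : m ∈ lab u0 := Nat.find_spec hE
    have hay0 : T.anc u0 (T.leaf y) := ⟨n0, rfl⟩
    have hmin : ∀ u' : V, m ∈ lab u' → T.anc u' (T.leaf y) → T.anc u' u0 := by
      rintro u' hm' ⟨j, hj⟩
      have hjn : n0 ≤ j := by
        by_contra hlt
        exact Nat.find_min hE (not_le.mp hlt) (by rw [hj]; exact hm')
      obtain ⟨c, rfl⟩ := Nat.exists_eq_add_of_le hjn
      exact ⟨c, by rw [hu0, ← Function.iterate_add_apply, Nat.add_comm, hj]⟩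
    refine ⟨u0, hm0, hay0, ?_, hmin⟩
    ext x
    by_cases hxy : x = y
    · subst hxy
      constructor
      · intro _; exact hay0
      · intro _; right; rfl
    · have key : m ∉ ε x y ↔ x ∈ T.cluster u0 := by
        constructor
        · intro hnot
          by_contra hxc
          obtain ⟨l, hl⟩ := lca_exists T (T.leaf x) (T.leaf y)
          rcases anc_total T hl.2.1 hay0 with h1 | h1
          · have hne : u0 ≠ l := by
              rintro rfl
              exact hxc (anc_trans T hl.1 (anc_refl T u0))
            exact hnot ((hex x y hxy m).mpr ⟨l, hl, u0, ⟨h1, hne, hay0⟩, hm0⟩)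
          · exact hxc (anc_trans T hl.1 h1)
        · intro hxc hmem
          obtain ⟨l, hl, u, ⟨hlu, hune, huy⟩, hmu⟩ := (hex x y hxy m).mp hmem
          have h0l : T.anc u0 l := hl.2.2 u0 hxc hay0
          have h0u : T.anc u0 u := anc_trans T hlu h0l
          have huu0 : T.anc u u0 := hmin u hmu huy
          have : u = u0 := anc_antisymm T huu0 h0u
          subst this
          exact hune (anc_antisymm T h0l hlu)
      constructor
      · rintro (⟨_, hnm⟩ | hmem)
        · exact key.mp hnm
        · exact absurd hmem hxy
      · intro hxc
        exact Or.inl ⟨hxy, key.mpr hxc⟩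
  · left
    push_neg at hE
    have hno : ∀ u : V, T.anc u (T.leaf y) → m ∉ lab u := by
      rintro u ⟨n, hn⟩
      rw [← hn]; exact hE n
    refine ⟨hno, Set.eq_univ_of_forall fun x => ?_⟩
    by_cases hxy : x = y
    · right; exact hxy
    · left
      refine ⟨hxy, fun hmem => ?_⟩
      obtain ⟨l, _, u, ⟨_, _, huy⟩, hmu⟩ := (hex x y hxy m).mp hmem
      exact hno u huy hmu

theorem fwd_hlike (hex : Explains T lab ε) : HLike (NbrSet ε) := by
  rintro P ⟨m, y, rfl⟩ Q ⟨m', y', rfl⟩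
  rcases nbr_cases T lab ε hex m y with ⟨_, hP⟩ | ⟨u, _, _, hP, _⟩
  · right; left; rw [hP, Set.univ_inter]
  rcases nbr_cases T lab ε hex m' y' with ⟨_, hQ⟩ | ⟨u', _, _, hQ, _⟩
  · left; rw [hQ, Set.inter_univ]
  rw [hP, hQ]
  by_cases hint : (T.cluster u ∩ T.cluster u').Nonempty
  · obtain ⟨x, hx1, hx2⟩ := hint
    rcases anc_total T hx1 hx2 with h | h
    · right; left
      rw [Set.inter_eq_self_of_subset_right (cluster_mono T h)]
    · left
      rw [Set.inter_eq_self_of_subset_left (cluster_mono T h)]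
  · right; right
    exact Set.not_nonempty_iff_eq_empty.mp hint

theorem fwd_ic (hex : Explains T lab ε) [Fintype X] : IneqCond ε := by
  intro m y y' hy'
  rcases nbr_cases T lab ε hex m y with ⟨_, hP⟩ | ⟨u, hmu, _, hP, _⟩
  · rw [hP]
    exact Set.ncard_le_ncard (Set.subset_univ _) (Set.toFinite _)
  · have hay' : T.anc u (T.leaf y') := by rw [hP] at hy'; exact hy'
    rcases nbr_cases T lab ε hex m y' with ⟨hno, _⟩ | ⟨u', hmu', _, hQ, hmin'⟩
    · exact absurd hmu (hno u hay')
    · have : T.anc u u' := hmin' u hmu hay'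
      rw [hP, hQ]
      exact Set.ncard_le_ncard (cluster_mono T this) (Set.toFinite _)

theorem fwd_kelc (hex : Explains T lab ε) [Fintype X] [Fintype M] {k : ℕ}
    (hbound : ∀ v : V, v ≠ T.root → (lab v).ncard ≤ k) : KELC ε k := by
  rintro N ⟨m, y, rfl⟩ hNuniv
  rcases nbr_cases T lab ε hex m y with ⟨_, hP⟩ | ⟨u, hmu, _, hP, _⟩
  · exact absurd hP hNuniv
  have hcne : T.cluster u ≠ Set.univ := by rw [← hP]; exact hNuniv
  have hur : u ≠ T.root := by
    rintro rfl
    exact hcne (cluster_root T)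
  have hsub : {m' : M | ∃ y' : X, Nbr ε m y = Nbr ε m' y'} ⊆ lab u := by
    rintro m' ⟨y', hN'⟩
    rcases nbr_cases T lab ε hex m' y' with ⟨_, hQ⟩ | ⟨u', hmu', _, hQ, _⟩
    · rw [hN'] at hNuniv; exact absurd hQ hNuniv
    · have : T.cluster u' = T.cluster u := by rw [← hQ, ← hN', hP]
      rw [cluster_inj T this (by rw [this]; exact hcne)] at hmu'
      exact hmu'
  calc {m' : M | ∃ y' : X, Nbr ε m y = Nbr ε m' y'}.ncard
      ≤ (lab u).ncard := Set.ncard_le_ncard hsub (Set.toFinite _)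
    _ ≤ k := hbound u hur

end Forward

end Fitch15
namespace Fitch15

section Backward

set_option linter.unusedSectionVars false

variable {X M : Type} [Fintype X] [Nonempty X] (ε : X → X → Set M)

/-- The hierarchy: neighborhoods, singletons, and the full set. -/
def Ham : Set (Set X) := NbrSet ε ∪ ({S : Set X | ∃ x : X, S = {x}} ∪ {Set.univ})

theorem univ_mem : (Set.univ : Set X) ∈ Ham ε := Or.inr (Or.inr rfl)

theorem singleton_mem (x : X) : ({x} : Set X) ∈ Ham ε := Or.inr (Or.inl ⟨x, rfl⟩)

theorem nbrMem (m : M) (y : X) : Nbr ε m y ∈ Ham ε := Or.inl ⟨m, y, rfl⟩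

theorem self_mem_nbr (m : M) (y : X) : y ∈ Nbr ε m y := Or.inr rfl

theorem mem_nonempty {S : Set X} (hS : S ∈ Ham ε) : S.Nonempty := by
  rcases hS with ⟨m, y, rfl⟩ | ⟨x, rfl⟩ | h
  · exact ⟨y, self_mem_nbr ε m y⟩
  · exact ⟨x, rfl⟩
  · rw [Set.mem_singleton_iff.mp h]; exact Set.univ_nonempty

theorem laminar (hH : HLike (NbrSet ε)) :
    ∀ P ∈ Ham ε, ∀ Q ∈ Ham ε, P ∩ Q = P ∨ P ∩ Q = Q ∨ P ∩ Q = ∅ := by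
  intro P hP Q hQ
  rcases hQ with hQ | ⟨x, rfl⟩ | hQ
  · rcases hP with hP | ⟨x, rfl⟩ | hP
    · exact hH P hP Q hQ
    · by_cases hx : x ∈ Q
      · left; rw [Set.inter_eq_self_of_subset_left (Set.singleton_subset_iff.mpr hx)]
      · right; right; rw [Set.singleton_inter_eq_empty.mpr hx]
    · rw [Set.mem_singleton_iff.mp hP]
      right; left; rw [Set.univ_inter]
  · by_cases hx : x ∈ P
    · right; left
      rw [Set.inter_eq_self_of_subset_right (Set.singleton_subset_iff.mpr hx)]
    · right; right; rw [Set.inter_singleton_eq_empty.mpr hx]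
  · rw [Set.mem_singleton_iff.mp hQ]
    left; rw [Set.inter_univ]

theorem comparable (hH : HLike (NbrSet ε)) {P Q : Set X} (hP : P ∈ Ham ε) (hQ : Q ∈ Ham ε)
    (h : (P ∩ Q).Nonempty) : P ⊆ Q ∨ Q ⊆ P := by
  rcases laminar ε hH P hP Q hQ with h1 | h1 | h1
  · left; rw [← h1]; exact Set.inter_subset_right
  · right; rw [← h1]; exact Set.inter_subset_left
  · rw [h1] at h; exact absurd h (by simp)

theorem chain_min {D : Set (Set X)} (hne : D.Nonempty)
    (hcomp : ∀ P ∈ D, ∀ Q ∈ D, P ⊆ Q ∨ Q ⊆ P) : ∃ P ∈ D, ∀ Q ∈ D, P ⊆ Q := by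
  obtain ⟨P, hP, hmin⟩ := Set.Finite.exists_minimalFor Set.ncard D (Set.toFinite D) hne
  refine ⟨P, hP, fun Q hQ => ?_⟩
  rcases hcomp P hP Q hQ with h | h
  · exact h
  · have : Q.ncard ≤ P.ncard := Set.ncard_le_ncard h (Set.toFinite _)
    have heq := Set.eq_of_subset_of_ncard_le h (hmin hQ this)
    rw [← heq]

theorem chain_max {D : Set (Set X)} (hne : D.Nonempty)
    (hcomp : ∀ P ∈ D, ∀ Q ∈ D, P ⊆ Q ∨ Q ⊆ P) : ∃ P ∈ D, ∀ Q ∈ D, Q ⊆ P := by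
  obtain ⟨P, hP, hmax⟩ := Set.Finite.exists_maximalFor Set.ncard D (Set.toFinite D) hne
  refine ⟨P, hP, fun Q hQ => ?_⟩
  rcases hcomp P hP Q hQ with h | h
  · have : P.ncard ≤ Q.ncard := Set.ncard_le_ncard h (Set.toFinite _)
    have heq := Set.eq_of_subset_of_ncard_le h (hmax hQ this)
    rw [heq]
  · exact h

theorem par_exists (hH : HLike (NbrSet ε)) {N : Set X} (hN : N ∈ Ham ε)
    (h : N ≠ Set.univ) :
    ∃ P ∈ {S : Set X | S ∈ Ham ε ∧ N ⊂ S}, ∀ Q ∈ {S : Set X | S ∈ Ham ε ∧ N ⊂ S}, P ⊆ Q := by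
  apply chain_min
  · exact ⟨Set.univ, univ_mem ε, Set.ssubset_univ_iff.mpr h⟩
  · rintro P ⟨hPH, hPN⟩ Q ⟨hQH, hQN⟩
    apply comparable ε hH hPH hQH
    obtain ⟨z, hz⟩ := mem_nonempty ε hN
    exact ⟨z, hPN.1 hz, hQN.1 hz⟩

/-- Vertex type of the constructed tree. -/
def BV (ε : X → X → Set M) : Type := {S : Set X // S ∈ Ham ε}

open Classical in
noncomputable def bpar (hH : HLike (NbrSet ε)) (v : BV ε) : BV ε :=
  if h : v.val = Set.univ then v
  else ⟨(par_exists ε hH v.2 h).choose, ((par_exists ε hH v.2 h).choose_spec).1.1⟩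

def broot : BV ε := ⟨Set.univ, univ_mem ε⟩

variable (hH : HLike (NbrSet ε))

open Classical in
theorem bpar_val {v : BV ε} (h : v.val ≠ Set.univ) :
    (bpar ε hH v).val = (par_exists ε hH v.2 h).choose := by
  unfold bpar; exact congrArg Subtype.val (dif_neg h)

theorem bpar_spec {v : BV ε} (h : v.val ≠ Set.univ) :
    v.val ⊂ (bpar ε hH v).val ∧ ∀ Q ∈ Ham ε, v.val ⊂ Q → (bpar ε hH v).val ⊆ Q := by
  have hs := (par_exists ε hH v.2 h).choose_spec
  rw [bpar_val ε hH h]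
  exact ⟨hs.1.2, fun Q hQ hvQ => hs.2 Q ⟨hQ, hvQ⟩⟩

theorem bpar_univ {v : BV ε} (h : v.val = Set.univ) : bpar ε hH v = v := by
  unfold bpar; exact dif_pos h

theorem bpar_le (v : BV ε) : v.val ⊆ (bpar ε hH v).val := by
  by_cases h : v.val = Set.univ
  · rw [bpar_univ ε hH h]
  · exact (bpar_spec ε hH h).1.subset

theorem broot_iff {v : BV ε} : v = broot ε ↔ v.val = Set.univ := by
  constructor
  · rintro rfl; rfl
  · intro h; exact Subtype.ext h

theorem bpar_reach (v : BV ε) : ∃ n : ℕ, (bpar ε hH)^[n] v = broot ε := by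
  suffices h : ∀ (n : ℕ) (v : BV ε), (v.valᶜ).ncard ≤ n → ∃ k : ℕ, (bpar ε hH)^[k] v = broot ε by
    exact h _ v le_rfl
  intro n
  induction n with
  | zero =>
    intro v hv
    have hc : (v.valᶜ) = ∅ := by
      rw [← Set.ncard_eq_zero (Set.toFinite _)]; omega
    exact ⟨0, (broot_iff ε).mpr (Set.compl_empty_iff.mp hc)⟩
  | succ k ih =>
    intro v hv
    by_cases h : v.val = Set.univ
    · exact ⟨0, broot_iff ε |>.mpr h⟩
    · have hss := (bpar_spec ε hH h).1
      have hcss : (bpar ε hH v).valᶜ ⊂ v.valᶜ := compl_lt_compl_iff_lt.mpr hss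
      have hlt : ((bpar ε hH v).valᶜ).ncard < (v.valᶜ).ncard :=
        Set.ncard_lt_ncard hcss (Set.toFinite _)
      obtain ⟨j, hj⟩ := ih (bpar ε hH v) (by omega)
      exact ⟨j + 1, by rw [Function.iterate_succ_apply, hj]⟩

theorem bpar_iterate_le (n : ℕ) (v : BV ε) : v.val ⊆ ((bpar ε hH)^[n] v).val := by
  induction n with
  | zero => exact le_rfl
  | succ k ih =>
    rw [Function.iterate_succ_apply']
    exact ih.trans (bpar_le ε hH _)

theorem banc_iff (u v : BV ε) : (∃ n : ℕ, (bpar ε hH)^[n] v = u) ↔ v.val ⊆ u.val := by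
  constructor
  · rintro ⟨n, rfl⟩
    exact bpar_iterate_le ε hH n v
  · suffices h : ∀ (n : ℕ) (v : BV ε), (v.valᶜ).ncard ≤ n → v.val ⊆ u.val →
        ∃ k : ℕ, (bpar ε hH)^[k] v = u by
      exact h _ v le_rfl
    intro n
    induction n with
    | zero =>
      intro v hv hsub
      have hv' : v.val = Set.univ := by
        apply Set.compl_empty_iff.mp
        rw [← Set.ncard_eq_zero (Set.toFinite _)]; omega
      have : u.val = Set.univ := Set.eq_univ_of_univ_subset (hv' ▸ hsub)
      exact ⟨0, Subtype.ext (hv'.trans this.symm)⟩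
    | succ k ih =>
      intro v hv hsub
      by_cases heq : v.val = u.val
      · exact ⟨0, Subtype.ext heq⟩
      · have hss : v.val ⊂ u.val := Set.ssubset_iff_subset_ne.mpr ⟨hsub, heq⟩
        have h : v.val ≠ Set.univ := by
          intro h
          exact heq (h.trans (Set.eq_univ_of_univ_subset (h ▸ hsub)).symm)
        have hpu : (bpar ε hH v).val ⊆ u.val := (bpar_spec ε hH h).2 u.val u.2 hss
        have hcss : (bpar ε hH v).valᶜ ⊂ v.valᶜ :=
          compl_lt_compl_iff_lt.mpr (bpar_spec ε hH h).1
        have hlt : ((bpar ε hH v).valᶜ).ncard < (v.valᶜ).ncard :=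
          Set.ncard_lt_ncard hcss (Set.toFinite _)
        obtain ⟨j, hj⟩ := ih (bpar ε hH v) (by omega) hpu
        exact ⟨j + 1, by rw [Function.iterate_succ_apply, hj]⟩

def bleaf (x : X) : BV ε := ⟨{x}, singleton_mem ε x⟩

/-- If `x ∈ v.val` and `v.val ≠ {x}`, then `v` has a strict child containing `x`. -/
theorem child_exists {v : BV ε} {x : X} (hx : x ∈ v.val) (hns : v.val ≠ {x}) :
    ∃ c : BV ε, bpar ε hH c = v ∧ c ≠ v ∧ x ∈ c.val := by
  classical
  set D : Set (Set X) := {S : Set X | S ∈ Ham ε ∧ x ∈ S ∧ S ⊂ v.val} with hD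
  have hDne : D.Nonempty := by
    refine ⟨{x}, singleton_mem ε x, rfl, ?_⟩
    exact Set.ssubset_iff_subset_ne.mpr ⟨Set.singleton_subset_iff.mpr hx, fun h => hns h.symm⟩
  have hDcomp : ∀ P ∈ D, ∀ Q ∈ D, P ⊆ Q ∨ Q ⊆ P := by
    rintro P ⟨hPH, hPx, _⟩ Q ⟨hQH, hQx, _⟩
    exact comparable ε hH hPH hQH ⟨x, hPx, hQx⟩
  obtain ⟨P, ⟨hPH, hPx, hPv⟩, hmax⟩ := chain_max hDne hDcomp
  set c : BV ε := ⟨P, hPH⟩ with hc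
  have hPuniv : P ≠ Set.univ := by
    intro h
    rw [h] at hPv
    exact hPv.ne (Set.eq_univ_of_univ_subset hPv.subset).symm
  have hsub : (bpar ε hH c).val ⊆ v.val := (bpar_spec ε hH hPuniv).2 v.val v.2 hPv
  have hppar : (bpar ε hH c).val = v.val := by
    by_contra hne
    have hss : (bpar ε hH c).val ⊂ v.val := Set.ssubset_iff_subset_ne.mpr ⟨hsub, hne⟩
    have hmem : (bpar ε hH c).val ∈ D :=
      ⟨(bpar ε hH c).2, (bpar_le ε hH c) hPx, hss⟩
    have := hmax _ hmem
    exact absurd ((bpar_spec ε hH hPuniv).1.2 this) (by simp)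
  refine ⟨c, Subtype.ext hppar, ?_, hPx⟩
  intro h
  exact hPv.ne (congrArg Subtype.val h)

theorem two_children {v : BV ε} (hns : ∀ x : X, v.val ≠ {x}) :
    2 ≤ {u : BV ε | bpar ε hH u = v ∧ u ≠ v}.ncard := by
  haveI : Finite (BV ε) := by unfold BV; infer_instance
  obtain ⟨x, hx⟩ := mem_nonempty ε v.2
  obtain ⟨c1, hc1p, hc1v, hc1x⟩ := child_exists ε hH hx (hns x)
  have hc1sub : c1.val ⊂ v.val := by
    refine Set.ssubset_iff_subset_ne.mpr ⟨?_, fun h => hc1v (Subtype.ext h)⟩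
    rw [← hc1p]; exact bpar_le ε hH c1
  obtain ⟨x', hx'v, hx'c⟩ := Set.exists_of_ssubset hc1sub
  obtain ⟨c2, hc2p, hc2v, hc2x⟩ := child_exists ε hH hx'v (hns x')
  have hne : c1 ≠ c2 := fun h => hx'c (h ▸ hc2x)
  have h1 : c1 ∈ {u : BV ε | bpar ε hH u = v ∧ u ≠ v} := ⟨hc1p, hc1v⟩
  have h2 : c2 ∈ {u : BV ε | bpar ε hH u = v ∧ u ≠ v} := ⟨hc2p, hc2v⟩
  have := (Set.one_lt_ncard (s := {u : BV ε | bpar ε hH u = v ∧ u ≠ v})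
    (Set.toFinite _)).mpr ⟨c1, h1, c2, h2, hne⟩
  omega

/-- The constructed phylogenetic tree. -/
noncomputable def bT : PhyloTree (BV ε) X where
  fin := by unfold BV; infer_instance
  root := broot ε
  par := bpar ε hH
  par_root := bpar_univ ε hH rfl
  reach := bpar_reach ε hH
  leaf := bleaf ε
  leaf_inj := by
    intro x y h
    have : ({x} : Set X) = {y} := congrArg Subtype.val h
    simpa using this
  leaf_isLeaf := by
    intro x u h
    by_cases hu : u.val = Set.univ
    · rw [← bpar_univ ε hH hu, h]
    · have := (bpar_spec ε hH hu).1
      rw [h] at this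
      have : u.val ⊂ {x} := this
      have := Set.ssubset_singleton_iff.mp this
      exact absurd (this ▸ mem_nonempty ε u.2) (by simp)
  leaf_only := by
    intro v hch
    obtain ⟨x, hx⟩ := mem_nonempty ε v.2
    by_cases hns : v.val = {x}
    · exact ⟨x, Subtype.ext hns.symm⟩
    · obtain ⟨c, hcp, hcv, _⟩ := child_exists ε hH hx hns
      exact absurd (hch c hcp) hcv
  root_deg := by
    by_cases h : ∃ x : X, (Set.univ : Set X) = {x}
    · obtain ⟨x, hx⟩ := h
      exact Or.inl ⟨x, Subtype.ext hx.symm⟩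
    · push_neg at h
      exact Or.inr (two_children ε hH h)
  inner_deg := by
    intro v _ hnl
    apply two_children ε hH
    intro x h
    exact hnl ⟨x, Subtype.ext h.symm⟩

end Backward

end Fitch15
namespace Fitch15

section Backward2

set_option linter.unusedSectionVars false

variable {X M : Type} [Fintype X] [Nonempty X] (ε : X → X → Set M)
variable (hH : HLike (NbrSet ε))

theorem bT_anc_iff (u v : BV ε) : (bT ε hH).anc u v ↔ v.val ⊆ u.val :=
  banc_iff ε hH u v

theorem blca_spec (x y : X) :
    ∃ l : BV ε, (bT ε hH).IsLca l ((bT ε hH).leaf x) ((bT ε hH).leaf y) ∧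
      x ∈ l.val ∧ y ∈ l.val ∧ ∀ Q ∈ Ham ε, x ∈ Q → y ∈ Q → l.val ⊆ Q := by
  have hDne : ({S : Set X | S ∈ Ham ε ∧ x ∈ S ∧ y ∈ S}).Nonempty :=
    ⟨Set.univ, univ_mem ε, trivial, trivial⟩
  have hDcomp : ∀ P ∈ {S : Set X | S ∈ Ham ε ∧ x ∈ S ∧ y ∈ S},
      ∀ Q ∈ {S : Set X | S ∈ Ham ε ∧ x ∈ S ∧ y ∈ S}, P ⊆ Q ∨ Q ⊆ P := by
    rintro P ⟨hPH, hPx, _⟩ Q ⟨hQH, hQx, _⟩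
    exact comparable ε hH hPH hQH ⟨x, hPx, hQx⟩
  obtain ⟨L, ⟨hLH, hLx, hLy⟩, hmin⟩ := chain_min hDne hDcomp
  refine ⟨⟨L, hLH⟩, ⟨?_, ?_, ?_⟩, hLx, hLy, fun Q hQ hQx hQy => hmin Q ⟨hQ, hQx, hQy⟩⟩
  · exact (bT_anc_iff ε hH _ _).mpr (Set.singleton_subset_iff.mpr hLx)
  · exact (bT_anc_iff ε hH _ _).mpr (Set.singleton_subset_iff.mpr hLy)
  · intro u hux huy
    have hxu : x ∈ u.val :=
      Set.singleton_subset_iff.mp ((bT_anc_iff ε hH _ _).mp hux)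
    have hyu : y ∈ u.val :=
      Set.singleton_subset_iff.mp ((bT_anc_iff ε hH _ _).mp huy)
    exact (bT_anc_iff ε hH _ _).mpr (hmin u.val ⟨u.2, hxu, hyu⟩)

/-- Edge labeling of the constructed tree. -/
def blab (v : BV ε) : Set M := {m : M | ∃ y : X, v.val = Nbr ε m y}

theorem bexplains (hIC : IneqCond ε) : Explains (bT ε hH) (blab ε) ε := by
  intro x y hxy m
  constructor
  · intro hm
    obtain ⟨l, hlca, hxl, hyl, _⟩ := blca_spec ε hH x y
    have hyN : y ∈ Nbr ε m y := self_mem_nbr ε m y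
    have hxN : x ∉ Nbr ε m y := by
      rintro (⟨_, hnm⟩ | h)
      · exact hnm hm
      · exact hxy h
    have hNl : Nbr ε m y ⊆ l.val := by
      rcases comparable ε hH (nbrMem ε m y) l.2 ⟨y, hyN, hyl⟩ with h | h
      · exact h
      · exact absurd (h hxl) hxN
    have hNe : Nbr ε m y ≠ l.val := fun h => hxN (h ▸ hxl)
    refine ⟨l, hlca, ⟨Nbr ε m y, nbrMem ε m y⟩, ⟨?_, ?_, ?_⟩, ⟨y, rfl⟩⟩
    · exact (bT_anc_iff ε hH _ _).mpr hNl
    · exact fun h => hNe (congrArg Subtype.val h)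
    · exact (bT_anc_iff ε hH _ _).mpr (Set.singleton_subset_iff.mpr hyN)
  · rintro ⟨l, hlca, u, ⟨hlu, hune, huy⟩, y', hNy'⟩
    have hyu : y ∈ u.val :=
      Set.singleton_subset_iff.mp ((bT_anc_iff ε hH _ _).mp huy)
    have hxu : x ∉ u.val := by
      intro hxu
      have h1 : (bT ε hH).anc u ((bT ε hH).leaf x) :=
        (bT_anc_iff ε hH _ _).mpr (Set.singleton_subset_iff.mpr hxu)
      have h2 : l.val ⊆ u.val := (bT_anc_iff ε hH _ _).mp (hlca.2.2 u h1 huy)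
      have h3 : u.val ⊆ l.val := (bT_anc_iff ε hH _ _).mp hlu
      exact hune (Subtype.ext (Set.Subset.antisymm h3 h2))
    rw [hNy'] at hyu hxu
    have hle := hIC m y' y hyu
    have hsub : Nbr ε m y ⊆ Nbr ε m y' := by
      rcases hH _ ⟨m, y, rfl⟩ _ ⟨m, y', rfl⟩ with h | h | h
      · rw [← h]; exact Set.inter_subset_right
      · have hs : Nbr ε m y' ⊆ Nbr ε m y := by
          rw [← h]; exact Set.inter_subset_left
        exact (Set.eq_of_subset_of_ncard_le hs hle).symm.subset
      · exfalso
        have : y ∈ Nbr ε m y ∩ Nbr ε m y' := ⟨self_mem_nbr ε m y, hyu⟩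
        rw [h] at this
        exact this
    by_contra hmc
    exact hxu (hsub (Or.inl ⟨hxy, hmc⟩))

theorem bbound {k : ℕ} (hELC : KELC ε k) :
    ∀ v : BV ε, v ≠ (bT ε hH).root → (blab ε v).ncard ≤ k := by
  intro v hv
  by_cases h : ∃ m : M, m ∈ blab ε v
  · obtain ⟨m, y', hN⟩ := h
    have hmem : v.val ∈ NbrSet ε := ⟨m, y', hN⟩
    have hne : v.val ≠ Set.univ := fun h' => hv ((broot_iff ε).mpr h')
    exact hELC v.val hmem hne
  · push_neg at h
    have : blab ε v = ∅ := Set.eq_empty_iff_forall_notMem.mpr h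
    rw [this]
    simp

end Backward2

end Fitch15

theorem k_restricted_iff {X M : Type} [Fintype X] [Fintype M] [Nonempty X] [Nonempty M]
    (ε : X → X → Set M) (k : ℕ) :
    KRestricted ε k ↔ HLike (NbrSet ε) ∧ IneqCond ε ∧ KELC ε k := by
  constructor
  · rintro ⟨V, T, lab, hex, hb⟩
    exact ⟨Fitch15.fwd_hlike T lab ε hex, Fitch15.fwd_ic T lab ε hex,
      Fitch15.fwd_kelc T lab ε hex hb⟩
  · rintro ⟨hH, hIC, hELC⟩
    exact ⟨Fitch15.BV ε, Fitch15.bT ε hH, Fitch15.blab ε,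
      Fitch15.bexplains ε hH hIC, Fitch15.bbound ε hH hELC⟩
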